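/- A finite set E of d points in Z^2 is a minimizer of the edge perimeter #Θ₂ among d-element subsets of Z^2 if and only if its number of unit bonds equals ⌊2d − 2√d⌋. -/

import Mathlib

open Finset Filter

set_option linter.unreachableTactic false
set_option linter.unusedTactic false

/-- Adjacency in `ℤ²`: Euclidean distance one. -/
def adj2 (x y : ℤ × ℤ) : Prop :=
  (x.1 - y.1) ^ 2 + (x.2 - y.2) ^ 2 = 1

/-- Cardinality of the edge boundary `Θ₂(E)` in `ℤ²` (ordered pairs). -/
noncomputable def theta2 (E : Finset (ℤ × ℤ)) : ℕ :=
  Set.ncard {p : (ℤ × ℤ) × (ℤ × ℤ) | adj2 p.1 p.2 ∧ p.1 ∈ E ∧ p.2 ∉ E}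

/-- Number of ordered bonded pairs of `E ⊂ ℤ²`; this equals `2 b(E)`. -/
noncomputable def bondPairs2 (E : Finset (ℤ × ℤ)) : ℕ :=
  Set.ncard {p : (ℤ × ℤ) × (ℤ × ℤ) | adj2 p.1 p.2 ∧ p.1 ∈ E ∧ p.2 ∈ E}

/-- Number of unit bonds `b(E) = ½·#{(x,y) ∈ E×E : |x−y|=1}`. -/
noncomputable def bonds2 (E : Finset (ℤ × ℤ)) : ℕ := bondPairs2 E / 2

/-! ### Basic facts about the adjacency relation -/

instance : ∀ x y : ℤ × ℤ, Decidable (adj2 x y) := fun x y => by unfold adj2; infer_instance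

/-- The four neighbours of a point. -/
def nbr (x : ℤ × ℤ) : Finset (ℤ × ℤ) := {(x.1+1,x.2), (x.1-1,x.2), (x.1,x.2+1), (x.1,x.2-1)}

lemma adj2_iff (x y : ℤ × ℤ) : adj2 x y ↔ y ∈ nbr x := by
  obtain ⟨a, b⟩ := x; obtain ⟨c, d⟩ := y
  simp only [adj2, nbr, Finset.mem_insert, Finset.mem_singleton, Prod.mk.injEq]
  constructor
  · intro h
    have h1 : (a - c)^2 ≤ 1 := by nlinarith [sq_nonneg (b - d)]
    have h2 : (b - d)^2 ≤ 1 := by nlinarith [sq_nonneg (a - c)]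
    have ha1 : a - c ≤ 1 := by nlinarith
    have ha2 : -1 ≤ a - c := by nlinarith
    have hb1 : b - d ≤ 1 := by nlinarith
    have hb2 : -1 ≤ b - d := by nlinarith
    have ha : a - c = -1 ∨ a - c = 0 ∨ a - c = 1 := by omega
    have hb : b - d = -1 ∨ b - d = 0 ∨ b - d = 1 := by omega
    rcases ha with ha | ha | ha <;> rcases hb with hb | hb | hb <;>
      first
        | (exfalso; nlinarith)
        | omega
  · rintro (⟨rfl, rfl⟩ | ⟨rfl, rfl⟩ | ⟨rfl, rfl⟩ | ⟨rfl, rfl⟩) <;> first | rfl | ring_nf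

lemma adj2_symm {x y : ℤ × ℤ} (h : adj2 x y) : adj2 y x := by
  unfold adj2 at *; nlinarith [h]

lemma not_adj2_self (x : ℤ × ℤ) : ¬ adj2 x x := by simp [adj2]

lemma card_nbr (x : ℤ × ℤ) : (nbr x).card = 4 := by
  obtain ⟨a, b⟩ := x
  simp only [nbr]
  rw [card_insert_of_notMem (by simp [Prod.ext_iff]; try omega),
      card_insert_of_notMem (by simp [Prod.ext_iff]; try omega),
      card_insert_of_notMem (by simp [Prod.ext_iff]; try omega), card_singleton]

/-! ### Finset versions of `theta2` and `bondPairs2` -/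

/-- All ordered adjacent pairs with first coordinate in `E`. -/
def adjF (E : Finset (ℤ × ℤ)) : Finset ((ℤ × ℤ) × (ℤ × ℤ)) :=
  E.biUnion fun x => (nbr x).image fun y => (x, y)

lemma mem_adjF {E : Finset (ℤ × ℤ)} {p : (ℤ × ℤ) × (ℤ × ℤ)} :
    p ∈ adjF E ↔ p.1 ∈ E ∧ adj2 p.1 p.2 := by
  obtain ⟨x, y⟩ := p
  simp only [adjF, mem_biUnion, mem_image, adj2_iff]
  constructor
  · rintro ⟨a, ha, b, hb, h⟩
    obtain ⟨rfl, rfl⟩ := Prod.mk.injEq .. ▸ h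
    cases h; exact ⟨ha, hb⟩
  · rintro ⟨hx, hy⟩; exact ⟨x, hx, y, hy, rfl⟩

lemma card_adjF (E : Finset (ℤ × ℤ)) : (adjF E).card = 4 * E.card := by
  rw [adjF, card_biUnion]
  · rw [Finset.sum_congr rfl (fun x _ => ?_), Finset.sum_const, smul_eq_mul, mul_comm]
    rw [Finset.card_image_of_injective _ (fun a b h => (Prod.mk.injEq .. ▸ h).2), card_nbr]
  · intro a _ b _ hab
    simp only [Finset.disjoint_left, mem_image]
    rintro p ⟨y, _, rfl⟩ ⟨z, _, h⟩
    exact hab (Prod.mk.injEq .. ▸ h).1.symm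

lemma theta2_eq (E : Finset (ℤ × ℤ)) :
    theta2 E = ((adjF E).filter fun p => p.2 ∉ E).card := by
  rw [theta2, ← Set.ncard_coe_finset]
  congr 1
  ext p
  simp only [Finset.coe_filter, Set.mem_setOf_eq, mem_adjF]
  tauto

lemma bondPairs2_eq (E : Finset (ℤ × ℤ)) :
    bondPairs2 E = ((adjF E).filter fun p => p.2 ∈ E).card := by
  rw [bondPairs2, ← Set.ncard_coe_finset]
  congr 1
  ext p
  simp only [Finset.coe_filter, Set.mem_setOf_eq, mem_adjF]
  tauto

lemma theta_add_bond (E : Finset (ℤ × ℤ)) :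
    theta2 E + bondPairs2 E = 4 * E.card := by
  rw [theta2_eq, bondPairs2_eq, ← card_adjF E]
  rw [← Finset.card_filter_add_card_filter_not (s := adjF E) (p := fun p => p.2 ∉ E)]
  congr 2
  apply Finset.filter_congr; intro p _; simp

/-! ### Decomposition of bonds into horizontal and vertical ones -/

def bondF (E : Finset (ℤ × ℤ)) : Finset ((ℤ × ℤ) × (ℤ × ℤ)) :=
  (adjF E).filter fun p => p.2 ∈ E

lemma bondPairs2_eq_card (E : Finset (ℤ × ℤ)) : bondPairs2 E = (bondF E).card :=
  bondPairs2_eq E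

lemma mem_bondF {E : Finset (ℤ × ℤ)} {p : (ℤ × ℤ) × (ℤ × ℤ)} :
    p ∈ bondF E ↔ p.1 ∈ E ∧ p.2 ∈ E ∧ adj2 p.1 p.2 := by
  simp only [bondF, mem_filter, mem_adjF]; tauto

def dE (v : ℤ × ℤ) (E : Finset (ℤ × ℤ)) : Finset ((ℤ × ℤ) × (ℤ × ℤ)) :=
  (bondF E).filter fun p => p.2 = (p.1.1 + v.1, p.1.2 + v.2)

/-- count of points whose `v`-translate is also in `E`. -/
def Wc (v : ℤ × ℤ) (E : Finset (ℤ × ℤ)) : ℕ :=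
  (E.filter fun x => (x.1 + v.1, x.2 + v.2) ∈ E).card

lemma bondF_eq_union (E : Finset (ℤ × ℤ)) :
    bondF E = dE (1,0) E ∪ dE (-1,0) E ∪ dE (0,1) E ∪ dE (0,-1) E := by
  ext ⟨⟨a,b⟩,⟨c,d⟩⟩
  simp only [mem_union, dE, mem_filter, mem_bondF]
  constructor
  · rintro ⟨h1, h2, h3⟩
    have h4 := h3
    rw [adj2_iff] at h4
    simp only [nbr, mem_insert, mem_singleton, Prod.mk.injEq] at h4
    rcases h4 with ⟨rfl, rfl⟩ | ⟨rfl, rfl⟩ | ⟨rfl, rfl⟩ | ⟨rfl, rfl⟩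
    · exact Or.inl (Or.inl (Or.inl ⟨⟨h1, h2, h3⟩, by simp [Prod.ext_iff]⟩))
    · exact Or.inl (Or.inl (Or.inr ⟨⟨h1, h2, h3⟩, by simp [Prod.ext_iff]; ring⟩))
    · exact Or.inl (Or.inr ⟨⟨h1, h2, h3⟩, by simp [Prod.ext_iff]⟩)
    · exact Or.inr ⟨⟨h1, h2, h3⟩, by simp [Prod.ext_iff]; ring⟩
  · rintro (((⟨h, _⟩ | ⟨h, _⟩) | ⟨h, _⟩) | ⟨h, _⟩) <;> exact h

lemma adj2_of_unit {v : ℤ × ℤ} (hv : v.1 ^ 2 + v.2 ^ 2 = 1) (x : ℤ × ℤ) :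
    adj2 x (x.1 + v.1, x.2 + v.2) := by
  unfold adj2; simp only; linear_combination hv

lemma card_dE {v : ℤ × ℤ} (hv : v.1 ^ 2 + v.2 ^ 2 = 1) (E : Finset (ℤ × ℤ)) :
    (dE v E).card = Wc v E := by
  have himg : dE v E
      = (E.filter fun x => (x.1 + v.1, x.2 + v.2) ∈ E).image
          (fun x => (x, (x.1 + v.1, x.2 + v.2))) := by
    ext p
    simp only [dE, mem_filter, mem_bondF, mem_image]
    constructor
    · rintro ⟨⟨h1, h2, _⟩, h4⟩
      exact ⟨p.1, ⟨h1, h4 ▸ h2⟩, Prod.ext_iff.mpr ⟨rfl, h4.symm⟩⟩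
    · rintro ⟨x, ⟨hx1, hx2⟩, rfl⟩
      exact ⟨⟨hx1, hx2, adj2_of_unit hv x⟩, rfl⟩
  rw [himg, Finset.card_image_of_injective _ fun a b h => congrArg Prod.fst h]
  rfl

lemma Wc_neg {v : ℤ × ℤ} (E : Finset (ℤ × ℤ)) : Wc (-v.1, -v.2) E = Wc v E := by
  apply Finset.card_bij' (fun x _ => ((x.1 - v.1 : ℤ), (x.2 - v.2 : ℤ)))
    (fun x _ => ((x.1 + v.1 : ℤ), (x.2 + v.2 : ℤ)))
  · intro x hx
    simp only [mem_filter] at hx ⊢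
    constructor
    · convert hx.2 using 2 <;> ring
    · convert hx.1 using 2 <;> ring
  · intro x hx
    simp only [mem_filter] at hx ⊢
    refine ⟨hx.2, ?_⟩
    convert hx.1 using 2 <;> ring
  · intro x _
    rw [Prod.ext_iff]
    constructor <;> simp
  · intro x _
    rw [Prod.ext_iff]
    constructor <;> simp

lemma dE_disjoint {v w : ℤ × ℤ} (hvw : v ≠ w) (E : Finset (ℤ × ℤ)) :
    Disjoint (dE v E) (dE w E) := by
  rw [Finset.disjoint_left]
  intro p hp hq
  simp only [dE, mem_filter] at hp hq
  apply hvw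
  rw [Prod.ext_iff]
  have h1 : p.1.1 + v.1 = p.1.1 + w.1 := congrArg Prod.fst (hp.2.symm.trans hq.2)
  have h2 : p.1.2 + v.2 = p.1.2 + w.2 := congrArg Prod.snd (hp.2.symm.trans hq.2)
  omega

lemma bondPairs2_eq_two_mul (E : Finset (ℤ × ℤ)) :
    bondPairs2 E = 2 * (Wc (1,0) E + Wc (0,1) E) := by
  have hb : bondPairs2 E = (bondF E).card := bondPairs2_eq E
  rw [hb, bondF_eq_union]
  rw [card_union_of_disjoint, card_union_of_disjoint, card_union_of_disjoint]
  · rw [card_dE (by norm_num) E, card_dE (by norm_num) E, card_dE (by norm_num) E,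
        card_dE (by norm_num) E]
    have h1 : Wc (-1,0) E = Wc (1,0) E := Wc_neg (v := (1,0)) E
    have h2 : Wc (0,-1) E = Wc (0,1) E := Wc_neg (v := (0,1)) E
    rw [h1, h2]; ring
  · exact dE_disjoint (by simp) E
  · rw [disjoint_union_left]
    exact ⟨dE_disjoint (by simp) E, dE_disjoint (by simp) E⟩
  · rw [disjoint_union_left, disjoint_union_left]
    exact ⟨⟨dE_disjoint (by simp) E, dE_disjoint (by simp) E⟩, dE_disjoint (by simp) E⟩

lemma bonds2_eq (E : Finset (ℤ × ℤ)) : bonds2 E = Wc (1,0) E + Wc (0,1) E := by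
  rw [bonds2, bondPairs2_eq_two_mul]; omega

lemma bondPairs2_even (E : Finset (ℤ × ℤ)) : bondPairs2 E = 2 * bonds2 E := by
  rw [bonds2_eq, bondPairs2_eq_two_mul]

/-! ### The upper bound -/

/-- row maxima (east-most point of each row). -/
def rowMax (E : Finset (ℤ × ℤ)) : Finset (ℤ × ℤ) :=
  E.filter fun x => ∀ z ∈ E, z.2 = x.2 → z.1 ≤ x.1

/-- column maxima (north-most point of each column). -/
def colMax (E : Finset (ℤ × ℤ)) : Finset (ℤ × ℤ) :=
  E.filter fun x => ∀ z ∈ E, z.1 = x.1 → z.2 ≤ x.2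

lemma rowMax_snd (E : Finset (ℤ × ℤ)) :
    (rowMax E).image Prod.snd = E.image Prod.snd := by
  apply Finset.Subset.antisymm
  · exact Finset.image_subset_image (filter_subset _ _)
  · intro y hy
    rw [mem_image] at hy
    obtain ⟨x, hx, rfl⟩ := hy
    have hne : ((E.filter fun z => z.2 = x.2).image Prod.fst).Nonempty :=
      ⟨x.1, mem_image.mpr ⟨x, mem_filter.mpr ⟨hx, rfl⟩, rfl⟩⟩
    have hmmem := Finset.max'_mem _ hne
    rw [mem_image] at hmmem
    obtain ⟨z, hz, hz1⟩ := hmmem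
    rw [mem_filter] at hz
    refine mem_image.mpr ⟨z, ?_, hz.2⟩
    rw [rowMax, mem_filter]
    refine ⟨hz.1, fun w hw hwz => ?_⟩
    rw [hz1]
    exact Finset.le_max' _ _ (mem_image.mpr ⟨w, mem_filter.mpr ⟨hw, by rw [hwz, hz.2]⟩, rfl⟩)

lemma colMax_fst (E : Finset (ℤ × ℤ)) :
    (colMax E).image Prod.fst = E.image Prod.fst := by
  apply Finset.Subset.antisymm
  · exact Finset.image_subset_image (filter_subset _ _)
  · intro y hy
    rw [mem_image] at hy
    obtain ⟨x, hx, rfl⟩ := hy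
    have hne : ((E.filter fun z => z.1 = x.1).image Prod.snd).Nonempty :=
      ⟨x.2, mem_image.mpr ⟨x, mem_filter.mpr ⟨hx, rfl⟩, rfl⟩⟩
    have hmmem := Finset.max'_mem _ hne
    rw [mem_image] at hmmem
    obtain ⟨z, hz, hz1⟩ := hmmem
    rw [mem_filter] at hz
    refine mem_image.mpr ⟨z, ?_, hz.2⟩
    rw [colMax, mem_filter]
    refine ⟨hz.1, fun w hw hwz => ?_⟩
    rw [hz1]
    exact Finset.le_max' _ _ (mem_image.mpr ⟨w, mem_filter.mpr ⟨hw, by rw [hwz, hz.2]⟩, rfl⟩)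

lemma Wc_e_le (E : Finset (ℤ × ℤ)) :
    Wc (1,0) E ≤ E.card - (E.image Prod.snd).card := by
  have hsub : (E.filter fun x => (x.1 + (1:ℤ), x.2 + (0:ℤ)) ∈ E) ⊆ E \ rowMax E := by
    intro x hx
    rw [mem_filter] at hx
    rw [Finset.mem_sdiff]
    refine ⟨hx.1, fun hmem => ?_⟩
    rw [rowMax, mem_filter] at hmem
    have := hmem.2 (x.1 + 1, x.2 + 0) hx.2 (by simp)
    simp at this
  calc Wc (1,0) E ≤ (E \ rowMax E).card := Finset.card_le_card hsub
    _ = E.card - (rowMax E).card := Finset.card_sdiff_of_subset (filter_subset _ _)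
    _ ≤ E.card - (E.image Prod.snd).card := by
        have h1 : (E.image Prod.snd).card ≤ (rowMax E).card := by
          rw [← rowMax_snd]; exact Finset.card_image_le
        omega

lemma Wc_n_le (E : Finset (ℤ × ℤ)) :
    Wc (0,1) E ≤ E.card - (E.image Prod.fst).card := by
  have hsub : (E.filter fun x => (x.1 + (0:ℤ), x.2 + (1:ℤ)) ∈ E) ⊆ E \ colMax E := by
    intro x hx
    rw [mem_filter] at hx
    rw [Finset.mem_sdiff]
    refine ⟨hx.1, fun hmem => ?_⟩
    rw [colMax, mem_filter] at hmem
    have := hmem.2 (x.1 + 0, x.2 + 1) hx.2 (by simp)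
    simp at this
  calc Wc (0,1) E ≤ (E \ colMax E).card := Finset.card_le_card hsub
    _ = E.card - (colMax E).card := Finset.card_sdiff_of_subset (filter_subset _ _)
    _ ≤ E.card - (E.image Prod.fst).card := by
        have h1 : (E.image Prod.fst).card ≤ (colMax E).card := by
          rw [← colMax_fst]; exact Finset.card_image_le
        omega

lemma card_le_rc (E : Finset (ℤ × ℤ)) :
    E.card ≤ (E.image Prod.fst).card * (E.image Prod.snd).card := by
  rw [← Finset.card_product]
  apply Finset.card_le_card
  intro x hx
  rw [Finset.mem_product]
  exact ⟨mem_image.mpr ⟨x, hx, rfl⟩, mem_image.mpr ⟨x, hx, rfl⟩⟩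

lemma bonds2_le_real (E : Finset (ℤ × ℤ)) :
    (bonds2 E : ℝ) ≤ 2 * E.card - 2 * Real.sqrt E.card := by
  set r := (E.image Prod.fst).card with hr
  set c := (E.image Prod.snd).card with hc
  have hrd : c ≤ E.card := Finset.card_image_le
  have hcd : r ≤ E.card := Finset.card_image_le
  have h1 := Wc_e_le E
  have h2 := Wc_n_le E
  have hb : bonds2 E ≤ 2 * E.card - r - c := by
    have := bonds2_eq E; omega
  have hb' : (bonds2 E : ℝ) ≤ 2 * E.card - r - c := by
    have h3 : (bonds2 E : ℝ) ≤ ((2 * E.card - r - c : ℕ) : ℝ) := by exact_mod_cast hb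
    have h4 : ((2 * E.card - r - c : ℕ) : ℝ) = 2 * E.card - r - c := by
      have : r + c ≤ 2 * E.card := by omega
      push_cast [Nat.cast_sub (by omega : r ≤ 2 * E.card),
        Nat.cast_sub (by omega : c ≤ 2 * E.card - r)]
      push_cast [Nat.cast_sub (by omega : r ≤ 2 * E.card)]
      ring
    linarith [h4 ▸ h3]
  have hrc : (E.card : ℝ) ≤ (r : ℝ) * c := by exact_mod_cast card_le_rc E
  have hsqrt : Real.sqrt E.card ≤ ((r : ℝ) + c) / 2 := by
    have h5 : Real.sqrt (E.card : ℝ) ≤ Real.sqrt ((((r : ℝ) + c) / 2) ^ 2) :=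
      Real.sqrt_le_sqrt (by nlinarith [sq_nonneg ((r:ℝ) - c)])
    rwa [Real.sqrt_sq (by positivity)] at h5
  linarith

/-! ### The spiral construction -/

/-- the `n`-th point of the quasi-square spiral enumeration of `ℕ × ℕ ⊂ ℤ × ℤ`. -/
def spt (n : ℕ) : ℤ × ℤ :=
  let k := Nat.sqrt n
  let j := n - k * k
  if j ≤ k then ((k : ℤ), (j : ℤ)) else ((2 * k - j : ℤ), (k : ℤ))

/-- inverse of `spt` on the nonnegative quadrant. -/
def spi (p : ℤ × ℤ) : ℕ :=
  if p.2 ≤ p.1 then (p.1 * p.1 + p.2).toNat else (p.2 * p.2 + 2 * p.2 - p.1).toNat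

lemma sqrt_bounds (n : ℕ) :
    Nat.sqrt n * Nat.sqrt n ≤ n ∧ n < Nat.sqrt n * Nat.sqrt n + 2 * Nat.sqrt n + 1 := by
  refine ⟨Nat.sqrt_le n, ?_⟩
  have h := Nat.lt_succ_sqrt n
  have : Nat.succ (Nat.sqrt n) * Nat.succ (Nat.sqrt n)
      = Nat.sqrt n * Nat.sqrt n + 2 * Nat.sqrt n + 1 := by
    rw [Nat.succ_eq_add_one]; ring
  omega

lemma spt_nonneg (n : ℕ) : 0 ≤ (spt n).1 ∧ 0 ≤ (spt n).2 := by
  unfold spt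
  obtain ⟨h1, h2⟩ := sqrt_bounds n
  set k := Nat.sqrt n
  by_cases h : n - k * k ≤ k
  · simp only [h, if_true]
    constructor <;> positivity
  · simp only [h, if_false]
    refine ⟨?_, by positivity⟩
    have : (n : ℤ) - k * k ≤ 2 * k := by push_cast; omega
    push_cast
    omega

lemma spi_spt (n : ℕ) : spi (spt n) = n := by
  unfold spt spi
  obtain ⟨h1, h2⟩ := sqrt_bounds n
  set k := Nat.sqrt n
  by_cases h : n - k * k ≤ k
  · simp only [h, if_true]
    rw [if_pos (by exact_mod_cast h)]
    have : ((k : ℤ) * k + (n - k * k : ℕ)).toNat = n := by push_cast; omega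
    exact this
  · simp only [h, if_false]
    rw [if_neg (by push_cast; omega)]
    have : ((k:ℤ) * k + 2 * k - (2 * k - (n - k*k : ℕ) : ℤ)).toNat = n := by push_cast; omega
    convert this using 3 <;> push_cast <;> ring

lemma spt_inj : Function.Injective spt :=
  Function.LeftInverse.injective spi_spt

lemma spt_spi {p : ℤ × ℤ} (h1 : 0 ≤ p.1) (h2 : 0 ≤ p.2) : spt (spi p) = p := by
  obtain ⟨a, b⟩ := p
  simp only at h1 h2
  lift a to ℕ using h1
  lift b to ℕ using h2
  unfold spi
  simp only
  by_cases h : (b : ℤ) ≤ (a : ℤ)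
  · have hb : b ≤ a := by exact_mod_cast h
    rw [if_pos h]
    have hbb : ((a * a : ℕ) : ℤ) = (a:ℤ) * (a:ℤ) := by push_cast; ring
    have he : ((a:ℤ) * a + b).toNat = a * a + b := by omega
    rw [he]
    have hs : Nat.sqrt (a * a + b) = a := Nat.sqrt_add_eq a (by omega)
    simp only [spt, hs]
    rw [if_pos (by omega)]
    have : a * a + b - a * a = b := by omega
    rw [this]
  · have hb : a < b := by omega
    rw [if_neg h]
    have hbb : ((b * b : ℕ) : ℤ) = (b:ℤ) * (b:ℤ) := by push_cast; ring
    have he : ((b:ℤ) * b + 2 * b - a).toNat = b * b + (2 * b - a) := by omega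
    rw [he]
    have hs : Nat.sqrt (b * b + (2 * b - a)) = b := Nat.sqrt_add_eq b (by omega)
    simp only [spt, hs]
    rw [if_neg (by omega)]
    have : b * b + (2 * b - a) - b * b = 2 * b - a := by omega
    rw [this, Prod.ext_iff]
    constructor
    · simp only
      push_cast [Nat.cast_sub (by omega : a ≤ 2 * b)]
      ring
    · rfl

/-- the spiral set with `d` points. -/
def spE (d : ℕ) : Finset (ℤ × ℤ) := (Finset.range d).image spt

lemma card_spE (d : ℕ) : (spE d).card = d := by
  rw [spE, Finset.card_image_of_injective _ spt_inj, Finset.card_range]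

lemma mem_spE {d : ℕ} {p : ℤ × ℤ} :
    p ∈ spE d ↔ 0 ≤ p.1 ∧ 0 ≤ p.2 ∧ spi p < d := by
  simp only [spE, mem_image, Finset.mem_range]
  constructor
  · rintro ⟨n, hn, rfl⟩
    exact ⟨(spt_nonneg n).1, (spt_nonneg n).2, by rw [spi_spt]; exact hn⟩
  · rintro ⟨ha, hb, hd⟩
    exact ⟨spi p, hd, spt_spi ha hb⟩

/-! ### Counting the bonds of the spiral set -/

lemma mem_spE_le {d : ℕ} {a b : ℤ} (ha : 0 ≤ a) (hb : 0 ≤ b) (hab : b ≤ a) :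
    (a, b) ∈ spE d ↔ a * a + b < d := by
  rw [mem_spE]
  simp only [spi, hab, if_true]
  have h0 : 0 ≤ a * a := mul_nonneg ha ha
  constructor
  · rintro ⟨-, -, h⟩; omega
  · intro h; exact ⟨ha, hb, by omega⟩

lemma mem_spE_gt {d : ℕ} {a b : ℤ} (ha : 0 ≤ a) (hb : 0 ≤ b) (hab : a < b) :
    (a, b) ∈ spE d ↔ b * b + 2 * b - a < d := by
  rw [mem_spE]
  simp only [spi]
  rw [if_neg (by omega)]
  have h0 : 0 ≤ b * b := mul_nonneg hb hb
  constructor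
  · rintro ⟨-, -, h⟩; omega
  · intro h; exact ⟨ha, hb, by omega⟩

lemma not_mem_spE_neg {d : ℕ} {p : ℤ × ℤ} (h : p.1 < 0 ∨ p.2 < 0) : p ∉ spE d := by
  rw [mem_spE]; omega

lemma filter_adj_eq (d : ℕ) (p : ℤ × ℤ) :
    (spE d).filter (fun q => adj2 p q) = (nbr p).filter (fun q => q ∈ spE d) := by
  ext q
  simp only [mem_filter, adj2_iff]
  tauto

/-- number of new bonds created when adding the `d`-th spiral point. -/
def spw (d : ℕ) : ℕ :=
  if d = 0 then 0
  else if d - Nat.sqrt d * Nat.sqrt d = 0 ∨ d - Nat.sqrt d * Nat.sqrt d = Nat.sqrt d then 1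
  else 2

lemma step_count (d : ℕ) :
    ((spE d).filter (fun q => adj2 (spt d) q)).card = spw d := by
  rcases Nat.eq_zero_or_pos d with rfl | hd0
  · simp [spE, spw]
  obtain ⟨hk1, hk2⟩ := sqrt_bounds d
  set k := Nat.sqrt d with hkdef
  set j := d - k * k with hjdef
  have hkk : ((k * k : ℕ) : ℤ) = (k : ℤ) * (k : ℤ) := by push_cast; ring
  have hdj : d = k * k + j := by omega
  have hj2k : j ≤ 2 * k := by omega
  rw [filter_adj_eq]
  by_cases hA : j ≤ k
  · -- p = (k, j)
    have hk1' : 1 ≤ k := by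
      rcases Nat.eq_zero_or_pos k with h | h
      · exfalso
        rw [h] at hdj hA
        simp at hdj hA
        omega
      · exact h
    have hp : spt d = ((k : ℤ), (j : ℤ)) := by
      rw [spt]; simp only [← hkdef, ← hjdef, hA, if_true]
    rw [hp]
    have hq1 : ((k:ℤ) + 1, (j:ℤ)) ∉ spE d := by
      rw [mem_spE_le (by positivity) (by positivity) (by push_cast; omega)]
      have : ((k:ℤ) + 1) * ((k:ℤ) + 1) = (k*k : ℕ) + 2 * k + 1 := by push_cast; ring
      omega
    have hq3 : ((k:ℤ), (j:ℤ) + 1) ∉ spE d := by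
      by_cases hjk : j = k
      · rw [mem_spE_gt (by positivity) (by positivity) (by push_cast; omega)]
        have : ((j:ℤ) + 1) * ((j:ℤ) + 1) = ((j*j : ℕ) : ℤ) + 2 * j + 1 := by push_cast; ring
        have hjj : ((j*j : ℕ) : ℤ) = ((k*k : ℕ) : ℤ) := by rw [hjk]
        omega
      · rw [mem_spE_le (by positivity) (by positivity) (by push_cast; omega)]
        omega
    by_cases hj0 : j = 0
    · -- N = {(k-1, 0)}
      have hq2 : ((k:ℤ) - 1, (j:ℤ)) ∈ spE d := by
        rw [mem_spE_le (by push_cast; omega) (by positivity) (by push_cast; omega)]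
        have : ((k:ℤ) - 1) * ((k:ℤ) - 1) = ((k*k : ℕ) : ℤ) - 2 * k + 1 := by push_cast; ring
        omega
      have hq4 : ((k:ℤ), (j:ℤ) - 1) ∉ spE d := by
        apply not_mem_spE_neg; right; simp only; omega
      have hN : (nbr ((k:ℤ), (j:ℤ))).filter (fun q => q ∈ spE d) = {((k:ℤ) - 1, (j:ℤ))} := by
        ext q
        simp only [nbr, mem_filter, mem_insert, mem_singleton]
        constructor
        · rintro ⟨(rfl | rfl | rfl | rfl), hq⟩
          · exact absurd hq hq1
          · rfl
          · exact absurd hq hq3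
          · exact absurd hq hq4
        · rintro rfl
          exact ⟨Or.inr (Or.inl rfl), hq2⟩
      rw [hN, card_singleton, spw]
      simp only [← hkdef, ← hjdef]
      rw [if_neg (by omega), if_pos (by omega)]
    · by_cases hjk : j = k
      · -- N = {(k, k-1)}
        have hq2 : ((k:ℤ) - 1, (j:ℤ)) ∉ spE d := by
          rw [mem_spE_gt (by push_cast; omega) (by positivity) (by push_cast; omega)]
          have : (j:ℤ) * (j:ℤ) = ((k*k : ℕ) : ℤ) := by rw [hjk]; push_cast; ring
          omega
        have hq4 : ((k:ℤ), (j:ℤ) - 1) ∈ spE d := by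
          rw [mem_spE_le (by positivity) (by push_cast; omega) (by push_cast; omega)]
          omega
        have hN : (nbr ((k:ℤ), (j:ℤ))).filter (fun q => q ∈ spE d) = {((k:ℤ), (j:ℤ) - 1)} := by
          ext q
          simp only [nbr, mem_filter, mem_insert, mem_singleton]
          constructor
          · rintro ⟨(rfl | rfl | rfl | rfl), hq⟩
            · exact absurd hq hq1
            · exact absurd hq hq2
            · exact absurd hq hq3
            · rfl
          · rintro rfl
            exact ⟨Or.inr (Or.inr (Or.inr rfl)), hq4⟩
        rw [hN, card_singleton, spw]
        simp only [← hkdef, ← hjdef]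
        rw [if_neg (by omega), if_pos (by omega)]
      · -- 0 < j < k : N = {(k-1, j), (k, j-1)}
        have hq2 : ((k:ℤ) - 1, (j:ℤ)) ∈ spE d := by
          rw [mem_spE_le (by push_cast; omega) (by positivity) (by push_cast; omega)]
          have : ((k:ℤ) - 1) * ((k:ℤ) - 1) = ((k*k : ℕ) : ℤ) - 2 * k + 1 := by push_cast; ring
          omega
        have hq4 : ((k:ℤ), (j:ℤ) - 1) ∈ spE d := by
          rw [mem_spE_le (by positivity) (by push_cast; omega) (by push_cast; omega)]
          omega
        have hN : (nbr ((k:ℤ), (j:ℤ))).filter (fun q => q ∈ spE d)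
            = {((k:ℤ) - 1, (j:ℤ)), ((k:ℤ), (j:ℤ) - 1)} := by
          ext q
          simp only [nbr, mem_filter, mem_insert, mem_singleton]
          constructor
          · rintro ⟨(rfl | rfl | rfl | rfl), hq⟩
            · exact absurd hq hq1
            · exact Or.inl rfl
            · exact absurd hq hq3
            · exact Or.inr rfl
          · rintro (rfl | rfl)
            · exact ⟨Or.inr (Or.inl rfl), hq2⟩
            · exact ⟨Or.inr (Or.inr (Or.inr rfl)), hq4⟩
        rw [hN]
        rw [card_insert_of_notMem (by simp only [mem_singleton, Prod.mk.injEq]; intro h; omega),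
          card_singleton, spw]
        simp only [← hkdef, ← hjdef]
        rw [if_neg (by omega), if_neg (by omega)]
  · -- p = (2k - j, k), k+1 ≤ j ≤ 2k
    have hk1' : 1 ≤ k := by omega
    have hp : spt d = ((2 * k - j : ℤ), (k : ℤ)) := by
      rw [spt]; simp only [← hkdef, ← hjdef, hA, if_false]
    set x : ℤ := (2 * k - j : ℤ) with hxdef
    have hx0 : 0 ≤ x := by rw [hxdef]; push_cast; omega
    have hxk : x ≤ (k:ℤ) - 1 := by rw [hxdef]; push_cast; omega
    rw [hp]
    have hq1 : (x + 1, (k:ℤ)) ∈ spE d := by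
      by_cases hxe : x + 1 = (k:ℤ)
      · rw [mem_spE_le (by omega) (by positivity) (by omega)]
        rw [← hxe]
        have : (x+1) * (x+1) + (x+1) ≤ ((k*k:ℕ):ℤ) + k := by
          rw [hxe]; omega
        omega
      · rw [mem_spE_gt (by omega) (by positivity) (by omega)]
        rw [hxdef]
        push_cast
        omega
    have hq2 : (x - 1, (k:ℤ)) ∉ spE d := by
      by_cases hx1 : x = 0
      · apply not_mem_spE_neg; left; simp only; omega
      · rw [mem_spE_gt (by omega) (by positivity) (by omega)]
        rw [hxdef]
        push_cast
        omega
    have hq3 : (x, (k:ℤ) + 1) ∉ spE d := by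
      rw [mem_spE_gt (by omega) (by positivity) (by omega)]
      have : ((k:ℤ) + 1) * ((k:ℤ) + 1) = ((k*k:ℕ):ℤ) + 2*k + 1 := by push_cast; ring
      omega
    have hq4 : (x, (k:ℤ) - 1) ∈ spE d := by
      by_cases hxe : x = (k:ℤ) - 1
      · rw [mem_spE_le (by omega) (by omega) (by omega)]
        rw [hxe]
        have : ((k:ℤ) - 1) * ((k:ℤ) - 1) = ((k*k:ℕ):ℤ) - 2*k + 1 := by push_cast; ring
        omega
      · rw [mem_spE_gt (by omega) (by omega) (by omega)]
        have : ((k:ℤ) - 1) * ((k:ℤ) - 1) = ((k*k:ℕ):ℤ) - 2*k + 1 := by push_cast; ring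
        omega
    have hN : (nbr (x, (k:ℤ))).filter (fun q => q ∈ spE d)
        = {(x + 1, (k:ℤ)), (x, (k:ℤ) - 1)} := by
      ext q
      simp only [nbr, mem_filter, mem_insert, mem_singleton]
      constructor
      · rintro ⟨(rfl | rfl | rfl | rfl), hq⟩
        · exact Or.inl rfl
        · exact absurd hq hq2
        · exact absurd hq hq3
        · exact Or.inr rfl
      · rintro (rfl | rfl)
        · exact ⟨Or.inl rfl, hq1⟩
        · exact ⟨Or.inr (Or.inr (Or.inr rfl)), hq4⟩
    rw [hN]
    rw [card_insert_of_notMem (by simp only [mem_singleton, Prod.mk.injEq]; intro h; omega),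
      card_singleton, spw]
    simp only [← hkdef, ← hjdef]
    rw [if_neg (by omega), if_neg (by omega)]

/-! ### Bond count of the spiral set via induction -/

lemma bondF_insert {p : ℤ × ℤ} {E : Finset (ℤ × ℤ)} (hp : p ∉ E) :
    (bondF (insert p E)).card = (bondF E).card + 2 * (E.filter (fun q => adj2 p q)).card := by
  set A1 := (E.filter (fun q => adj2 p q)).image (fun q => (p, q)) with hA1
  set A2 := (E.filter (fun q => adj2 p q)).image (fun q => (q, p)) with hA2
  have hset : bondF (insert p E) = bondF E ∪ A1 ∪ A2 := by
    ext ⟨x, y⟩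
    simp only [mem_bondF, mem_union, mem_insert, hA1, hA2, mem_image, mem_filter, Prod.mk.injEq]
    constructor
    · rintro ⟨(rfl | hx), (rfl | hy), hadj⟩
      · exact absurd hadj (not_adj2_self _)
      · exact Or.inl (Or.inr ⟨y, ⟨hy, hadj⟩, rfl, rfl⟩)
      · exact Or.inr ⟨x, ⟨hx, adj2_symm hadj⟩, rfl, rfl⟩
      · exact Or.inl (Or.inl ⟨hx, hy, hadj⟩)
    · rintro ((⟨hx, hy, hadj⟩ | ⟨q, ⟨hq, hadj⟩, rfl, rfl⟩) | ⟨q, ⟨hq, hadj⟩, rfl, rfl⟩)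
      · exact ⟨Or.inr hx, Or.inr hy, hadj⟩
      · exact ⟨Or.inl rfl, Or.inr hq, hadj⟩
      · exact ⟨Or.inr hq, Or.inl rfl, adj2_symm hadj⟩
  have hd1 : Disjoint (bondF E) A1 := by
    rw [Finset.disjoint_left]
    rintro ⟨x, y⟩ hb ha
    rw [mem_bondF] at hb
    rw [hA1, mem_image] at ha
    obtain ⟨q, -, hq⟩ := ha
    rw [Prod.mk.injEq] at hq
    exact hp (hq.1 ▸ hb.1)
  have hd2 : Disjoint (bondF E ∪ A1) A2 := by
    rw [Finset.disjoint_left]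
    rintro ⟨x, y⟩ hb ha
    rw [hA2, mem_image] at ha
    obtain ⟨q, -, hq⟩ := ha
    rw [Prod.mk.injEq] at hq
    rcases Finset.mem_union.mp hb with hb | hb
    · rw [mem_bondF] at hb
      exact hp (hq.2 ▸ hb.2.1)
    · rw [hA1, mem_image] at hb
      obtain ⟨q', hq', hqq⟩ := hb
      rw [Prod.mk.injEq] at hqq
      rw [mem_filter] at hq'
      refine hp ?_
      rw [show p = q' from hq.2.trans hqq.2.symm]
      exact hq'.1
  have hc1 : A1.card = (E.filter (fun q => adj2 p q)).card :=
    Finset.card_image_of_injective _ (fun a b h => (Prod.mk.injEq .. ▸ h).2)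
  have hc2 : A2.card = (E.filter (fun q => adj2 p q)).card :=
    Finset.card_image_of_injective _ (fun a b h => (Prod.mk.injEq .. ▸ h).1)
  rw [hset, card_union_of_disjoint hd2, card_union_of_disjoint hd1, hc1, hc2]
  ring

lemma spE_succ (d : ℕ) : spE (d + 1) = insert (spt d) (spE d) := by
  rw [spE, Finset.range_add_one, Finset.image_insert]; rfl

lemma spt_not_mem (d : ℕ) : spt d ∉ spE d := by
  rw [spE, mem_image]
  rintro ⟨n, hn, h⟩
  rw [Finset.mem_range] at hn
  exact absurd (spt_inj h) (by omega)

lemma bondPairs2_spE (d : ℕ) : bondPairs2 (spE d) = 2 * ∑ n ∈ Finset.range d, spw n := by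
  induction d with
  | zero => simp [bondPairs2_eq_card, bondF, adjF, spE]
  | succ d ih =>
      rw [bondPairs2_eq_card] at ih ⊢
      rw [spE_succ, bondF_insert (spt_not_mem d), ih, step_count, Finset.sum_range_succ]
      ring

/-- closed form for the number of bonds of the spiral set. -/
def spC (d : ℕ) : ℕ :=
  if d - Nat.sqrt d * Nat.sqrt d = 0 then 2 * Nat.sqrt d * Nat.sqrt d - 2 * Nat.sqrt d
  else if d - Nat.sqrt d * Nat.sqrt d ≤ Nat.sqrt d then 2 * d - 2 * Nat.sqrt d - 1
  else 2 * d - 2 * Nat.sqrt d - 2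

lemma spC_succ (d : ℕ) : spC (d + 1) = spC d + spw d := by
  rcases Nat.eq_zero_or_pos d with rfl | hd0
  · decide
  obtain ⟨hk1, hk2⟩ := sqrt_bounds d
  set k := Nat.sqrt d with hkdef
  set j := d - k * k with hjdef
  have hb : (k + 1) * (k + 1) = k * k + 2 * k + 1 := by ring
  have hk0 : 1 ≤ k := by
    rcases Nat.eq_zero_or_pos k with h | h
    · exfalso; rw [h] at hk2; simp at hk2; omega
    · exact h
  have hkk : k ≤ k * k := Nat.le_mul_of_pos_left k hk0
  have hb2 : 2 * (k + 1) * (k + 1) = 2 * (k * k) + 4 * k + 2 := by ring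
  have hb3 : 2 * k * k = 2 * (k * k) := by ring
  by_cases hj2k : j = 2 * k
  · have hd1 : d + 1 = (k + 1) * (k + 1) := by omega
    have hs : Nat.sqrt (d + 1) = k + 1 := by rw [hd1, Nat.sqrt_eq]
    unfold spC spw
    simp only [hs, ← hkdef]
    split_ifs <;> omega
  · have hs : Nat.sqrt (d + 1) = k := by
      rw [show d + 1 = k * k + (j + 1) by omega, Nat.sqrt_add_eq k (by omega)]
    unfold spC spw
    simp only [hs, ← hkdef]
    split_ifs <;> omega

lemma sum_spw (d : ℕ) : ∑ n ∈ Finset.range d, spw n = spC d := by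
  induction d with
  | zero => simp [spC]
  | succ d ih => rw [Finset.sum_range_succ, ih, ← spC_succ]

lemma bonds2_spE (d : ℕ) : bonds2 (spE d) = spC d := by
  rw [bonds2, bondPairs2_spE, sum_spw]
  omega

lemma spC_real (d : ℕ) : 2 * (d : ℝ) - 2 * Real.sqrt d < spC d + 1 := by
  obtain ⟨hk1, hk2⟩ := sqrt_bounds d
  set k := Nat.sqrt d with hkdef
  set j := d - k * k with hjdef
  have hdk : (d : ℝ) ≥ (k : ℝ) * k := by exact_mod_cast hk1
  by_cases hj0 : j = 0
  · have hC : spC d = 2 * k * k - 2 * k := by unfold spC; rw [← hkdef, if_pos (by omega)]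
    have hd : d = k * k := by omega
    have hsq : Real.sqrt d = k := by
      rw [show (d : ℝ) = (k : ℝ) ^ 2 by rw [hd]; push_cast; ring]
      exact Real.sqrt_sq (by positivity)
    have hkk : k ≤ k * k := by
      rcases Nat.eq_zero_or_pos k with h | h
      · simp [h]
      · exact Nat.le_mul_of_pos_left k h
    have hb3 : 2 * k * k = 2 * (k * k) := by ring
    have hCc : (spC d : ℝ) = 2 * (k : ℝ) * k - 2 * k := by
      rw [hC, Nat.cast_sub (by omega)]
      push_cast; ring
    rw [hsq, hCc]
    have : (d : ℝ) = (k : ℝ) * k := by rw [hd]; push_cast; ring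
    linarith
  · by_cases hjk : j ≤ k
    · have hC : spC d = 2 * d - 2 * k - 1 := by
        unfold spC; rw [← hkdef, if_neg (by omega), if_pos (by omega)]
      have hk1' : 1 ≤ k := by
        rcases Nat.eq_zero_or_pos k with h | h
        · exfalso; rw [h] at hjdef hjk; omega
        · exact h
      have hkk : k ≤ k * k := Nat.le_mul_of_pos_left k hk1'
      have h2d : 2 * k + 2 ≤ 2 * d := by omega
      have hCc : (spC d : ℝ) = 2 * (d : ℝ) - 2 * k - 1 := by
        rw [hC, Nat.cast_sub (by omega), Nat.cast_sub (by omega)]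
        push_cast; ring
      have hsq : (k : ℝ) < Real.sqrt d := by
        rw [show (k : ℝ) = Real.sqrt ((k:ℝ)^2) by rw [Real.sqrt_sq (by positivity)]]
        apply Real.sqrt_lt_sqrt (by positivity)
        have h3 : (k : ℝ) ^ 2 = (k : ℝ) * k := by ring
        rw [h3]
        have h4 : k * k < d := by omega
        exact_mod_cast h4
      rw [hCc]
      linarith
    · have hC : spC d = 2 * d - 2 * k - 2 := by
        unfold spC; rw [← hkdef, if_neg (by omega), if_neg (by omega)]
      have hk1' : 1 ≤ k := by omega
      have hkk : k ≤ k * k := Nat.le_mul_of_pos_left k hk1'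
      have h2d : 2 * k + 3 ≤ 2 * d := by omega
      have hCc : (spC d : ℝ) = 2 * (d : ℝ) - 2 * k - 2 := by
        rw [hC, Nat.cast_sub (by omega), Nat.cast_sub (by omega)]
        push_cast; ring
      have hsq : (k : ℝ) + 1/2 < Real.sqrt d := by
        rw [show (k : ℝ) + 1/2 = Real.sqrt (((k:ℝ) + 1/2)^2) by rw [Real.sqrt_sq (by positivity)]]
        apply Real.sqrt_lt_sqrt (by positivity)
        have h1 : k * k + k + 1 ≤ d := by omega
        have h2 : ((k:ℝ) * k + k + 1 : ℝ) ≤ d := by exact_mod_cast h1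
        nlinarith
      rw [hCc]
      linarith

/-! ### Main theorem -/

/-- a `d`-element `E ⊂ ℤ²` minimizes the edge perimeter iff its
number of unit bonds equals `⌊2d − 2√d⌋`. -/
theorem minimizer2_iff_bonds (d : ℕ) (E : Finset (ℤ × ℤ)) (hE : E.card = d) :
    (∀ F : Finset (ℤ × ℤ), F.card = d → theta2 E ≤ theta2 F) ↔
      (bonds2 E : ℤ) = ⌊(2 * (d : ℝ) - 2 * Real.sqrt d)⌋ := by
  have hub : ∀ F : Finset (ℤ × ℤ), F.card = d →
      (bonds2 F : ℤ) ≤ ⌊(2 * (d : ℝ) - 2 * Real.sqrt d)⌋ := by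
    intro F hF
    apply Int.le_floor.mpr
    have := bonds2_le_real F
    rw [hF] at this
    exact_mod_cast this
  have hkey : ⌊(2 * (d : ℝ) - 2 * Real.sqrt d)⌋ = (spC d : ℤ) := by
    apply le_antisymm
    · have h1 : ⌊(2 * (d : ℝ) - 2 * Real.sqrt d)⌋ < (spC d : ℤ) + 1 := by
        apply Int.floor_lt.mpr
        push_cast
        exact spC_real d
      omega
    · have h2 := hub (spE d) (card_spE d)
      rw [bonds2_spE] at h2
      exact h2
  constructor
  · intro hmin
    have h5 := hmin (spE d) (card_spE d)
    have hA := theta_add_bond E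
    have hB := theta_add_bond (spE d)
    rw [hE] at hA
    rw [card_spE] at hB
    have h6 : bondPairs2 (spE d) ≤ bondPairs2 E := by omega
    have h7 : spC d ≤ bonds2 E := by
      have he1 := bondPairs2_even E
      have he2 := bondPairs2_even (spE d)
      have he3 := bonds2_spE d
      omega
    have h8 := hub E hE
    rw [hkey] at h8 ⊢
    have h9 : bonds2 E ≤ spC d := by exact_mod_cast h8
    have : bonds2 E = spC d := le_antisymm h9 h7
    exact_mod_cast this
  · intro heq F hF
    have h8 := hub F hF
    rw [← heq] at h8
    have h9 : bonds2 F ≤ bonds2 E := by exact_mod_cast h8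
    have h10 : bondPairs2 F ≤ bondPairs2 E := by
      have he1 := bondPairs2_even E
      have he2 := bondPairs2_even F
      omega
    have hA := theta_add_bond E
    have hB := theta_add_bond F
    rw [hE] at hA
    rw [hF] at hB
    omega
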